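/- Let A(k), k ≥ 1, be row-stochastic n×n matrices all of whose digraphs G(A(k)) contain a common aperiodic subgraph H without sinks on the full node set {1,…,n}. Let P(k) = A(k)···A(1) and define S_j(k) = {i : P(k)_{i,j} > 0}, with P(0) the identity. Then for all l ≤ k with k − l ≥ n² − 2n + 2, S_j(l) ⊆ S_j(k). -/

import Mathlib

open Matrix Filter

/-- Row-stochastic matrix: nonnegative entries and row sums equal to 1. -/
def Stochastic {n : ℕ} (A : Matrix (Fin n) (Fin n) ℝ) : Prop :=
  (∀ i j, 0 ≤ A i j) ∧ ∀ i, ∑ j, A i j = 1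

/-- There is a walk of length `k` from `i` to `j` in the digraph with edge relation `E`. -/
def HasWalk {n : ℕ} (E : Fin n → Fin n → Prop) (i j : Fin n) (k : ℕ) : Prop :=
  ∃ f : ℕ → Fin n, f 0 = i ∧ f k = j ∧ ∀ m < k, E (f m) (f (m + 1))

/-- The gcd of the lengths of closed walks at `i` (which all stay inside the strongly
connected component of `i`) is 1.  Equivalently, the component of `i` is aperiodic. -/
def AperiodicAt {n : ℕ} (E : Fin n → Fin n → Prop) (i : Fin n) : Prop :=
  ∀ d : ℕ, (∀ k, 0 < k → HasWalk E i i k → d ∣ k) → d = 1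

/-- `backProd A l m = A (l+m) ⬝ A (l+m-1) ⬝ ⋯ ⬝ A (l+1)`, so that
`backProd A l (k-l)` is the partial product `P(k,l)` and `backProd A 0 k = P(k)`. -/
def backProd {n : ℕ} (A : ℕ → Matrix (Fin n) (Fin n) ℝ) (l : ℕ) : ℕ → Matrix (Fin n) (Fin n) ℝ
  | 0 => 1
  | m + 1 => A (l + m + 1) * backProd A l m

/-- Vector seminorm: sup-norm distance to the line spanned by the all-ones vector. -/
noncomputable def sn {n : ℕ} (x : Fin n → ℝ) : ℝ :=
  ⨅ c : ℝ, ‖x - Function.const (Fin n) c‖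

/-- Induced matrix seminorm `‖A‖ = sup { ‖Ax‖/‖x‖ : ‖x‖ ≠ 0 }`. -/
noncomputable def msn {n : ℕ} (A : Matrix (Fin n) (Fin n) ℝ) : ℝ :=
  sSup {r : ℝ | ∃ x : Fin n → ℝ, sn x ≠ 0 ∧ r = sn (A.mulVec x) / sn x}

/-- `mu P j` = minimum of the positive entries of column `j` of `P`. -/
noncomputable def mu {n : ℕ} (P : Matrix (Fin n) (Fin n) ℝ) (j : Fin n) : ℝ :=
  sInf {v : ℝ | ∃ i, 0 < P i j ∧ P i j = v}

/-- Completely reducible: whenever `A i j > 0` there is a directed walk from `j`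
back to `i` in `G(A)`; i.e. no edges between distinct strongly connected components. -/
def CompRed {n : ℕ} (A : Matrix (Fin n) (Fin n) ℝ) : Prop :=
  ∀ i j, 0 < A i j → ∃ k, HasWalk (fun a b => 0 < A a b) j i k

section WalkLemmas

variable {n : ℕ} {E : Fin n → Fin n → Prop}

lemma hasWalk_len_eq {i j : Fin n} {a b : ℕ} (h : a = b) (hw : HasWalk E i j a) :
    HasWalk E i j b := h ▸ hw

lemma hasWalk_refl (E : Fin n → Fin n → Prop) (i : Fin n) : HasWalk E i i 0 :=
  ⟨fun _ => i, rfl, rfl, fun m hm => absurd hm (Nat.not_lt_zero m)⟩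

lemma hasWalk_single {i j : Fin n} (h : E i j) : HasWalk E i j 1 :=
  ⟨fun t => if t = 0 then i else j, by simp, by simp, by
    intro m hm
    interval_cases m
    simpa using h⟩

lemma hasWalk_concat {i j k : Fin n} {a b : ℕ}
    (h1 : HasWalk E i j a) (h2 : HasWalk E j k b) : HasWalk E i k (a + b) := by
  obtain ⟨f, hf0, hfa, hf⟩ := h1
  obtain ⟨g, hg0, hgb, hg⟩ := h2
  refine ⟨fun t => if t < a then f t else g (t - a), ?_, ?_, ?_⟩
  · by_cases h : 0 < a
    · simpa [h] using hf0
    · have ha : a = 0 := by omega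
      subst ha
      have hgi : g 0 = i := by rw [hg0, ← hfa, hf0]
      simpa using hgi
  · have h : ¬ (a + b < a) := by omega
    simp only [if_neg h]
    rw [Nat.add_sub_cancel_left, hgb]
  · intro m hm
    by_cases h1 : m + 1 < a
    · have hma : m < a := by omega
      simp only [if_pos h1, if_pos hma]
      exact hf m hma
    · by_cases h2 : m < a
      · have hma : m + 1 = a := by omega
        simp only [if_pos h2, if_neg h1]
        have hval : g (m + 1 - a) = f (m + 1) := by
          rw [show m + 1 - a = 0 by omega, hg0, ← hfa, hma]
        rw [hval]
        exact hf m h2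
      · simp only [if_neg h1, if_neg h2]
        have hmb : m - a < b := by omega
        have := hg (m - a) hmb
        rw [show m + 1 - a = (m - a) + 1 by omega]
        exact this

lemma hasWalk_split {i k : Fin n} {a b : ℕ} (h : HasWalk E i k (a + b)) :
    ∃ j, HasWalk E i j a ∧ HasWalk E j k b := by
  obtain ⟨f, hf0, hfk, hf⟩ := h
  exact ⟨f a, ⟨f, hf0, rfl, fun m hm => hf m (by omega)⟩,
    ⟨fun t => f (a + t), rfl, hfk, fun m hm => hf (a + m) (by omega)⟩⟩

lemma mult_walk {c : Fin n} {s : ℕ} (h : HasWalk E c c s) (j : ℕ) :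
    HasWalk E c c (j * s) := by
  induction j with
  | zero => simpa using hasWalk_refl E c
  | succ j ih => exact hasWalk_len_eq (by ring) (hasWalk_concat ih h)

lemma residue_walk {c : Fin n} (hap : AperiodicAt E c)
    {s : ℕ} (hs : 0 < s) (hsw : HasWalk E c c s) (r : ℕ) :
    ∃ e, 0 < e ∧ HasWalk E c c e ∧ e % s = r % s := by
  classical
  set L : Set ℤ := {x : ℤ | ∃ e : ℕ, 0 < e ∧ HasWalk E c c e ∧ (e : ℤ) = x} with hL
  obtain ⟨g, hg⟩ := Int.subgroup_cyclic (AddSubgroup.closure L)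
  have hdvd : ∀ e : ℕ, 0 < e → HasWalk E c c e → g.natAbs ∣ e := by
    intro e he hw
    have hmem : (e : ℤ) ∈ AddSubgroup.closure L :=
      AddSubgroup.subset_closure ⟨e, he, hw, rfl⟩
    rw [hg, AddSubgroup.mem_closure_singleton] at hmem
    obtain ⟨z, hz⟩ := hmem
    have hdd : g ∣ (e : ℤ) := ⟨z, by rw [← hz, zsmul_eq_mul, Int.cast_id, mul_comm]⟩
    exact_mod_cast Int.natAbs_dvd_natAbs.mpr hdd
  have habs : g.natAbs = 1 := hap _ hdvd
  have h1mem : (1 : ℤ) ∈ AddSubgroup.closure L := by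
    have hgmem : g ∈ AddSubgroup.closure L := by
      rw [hg]; exact AddSubgroup.subset_closure rfl
    rcases Int.natAbs_eq g with h | h
    · rw [habs] at h
      have h1 : g = 1 := by exact_mod_cast h
      rwa [h1] at hgmem
    · rw [habs] at h
      have h1 : g = -1 := by exact_mod_cast h
      have h2 := AddSubgroup.neg_mem _ hgmem
      rw [h1] at h2
      simpa using h2
  have key : ∀ x ∈ AddSubgroup.closure L,
      ∃ e : ℕ, 0 < e ∧ HasWalk E c c e ∧ ((e : ZMod s) = ((x : ℤ) : ZMod s)) := by
    intro x hx
    induction hx using AddSubgroup.closure_induction with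
    | mem y hy =>
      obtain ⟨e, he, hw, hcast⟩ := hy
      exact ⟨e, he, hw, by rw [← hcast]; push_cast; ring⟩
    | zero => exact ⟨s, hs, hsw, by simp [ZMod.natCast_self]⟩
    | add x y hx hy ihx ihy =>
      obtain ⟨e1, he1, hw1, hc1⟩ := ihx
      obtain ⟨e2, he2, hw2, hc2⟩ := ihy
      exact ⟨e1 + e2, by omega, hasWalk_concat hw1 hw2, by push_cast; rw [hc1, hc2]⟩
    | neg x hx ihx =>
      obtain ⟨e, he, hw, hc⟩ := ihx
      refine ⟨(s - 1) * e + s, by omega, hasWalk_concat (mult_walk hw (s - 1)) hsw, ?_⟩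
      have hsm : ((s - 1 : ℕ) : ZMod s) = -1 := by
        rw [Nat.cast_sub hs]; simp [ZMod.natCast_self]
      push_cast
      rw [hsm, ZMod.natCast_self, hc]
      ring
  obtain ⟨e1, he1, hw1, hc1⟩ := key 1 h1mem
  refine ⟨r * e1 + s, by omega, hasWalk_concat (mult_walk hw1 r) hsw, ?_⟩
  have : ((r * e1 + s : ℕ) : ZMod s) = (r : ZMod s) := by
    push_cast
    rw [hc1, ZMod.natCast_self]
    push_cast
    ring
  exact (ZMod.natCast_eq_natCast_iff _ _ _).mp this

lemma chain_walk {w v : Fin n} {s : ℕ} (hsw : HasWalk E w w s) {r k : ℕ}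
    (h : HasWalk E w v (r + k * s)) : HasWalk E w v (r + (n - 1) * s) := by
  classical
  have hn : 0 < n := w.pos
  set R : ℕ → Set (Fin n) := fun t => {x | HasWalk E w x (r + t * s)} with hR
  have hmono : ∀ t, R t ⊆ R (t + 1) := by
    intro t x hx
    exact hasWalk_len_eq (by ring) (hasWalk_concat hsw hx)
  have hmono' : ∀ t t', t ≤ t' → R t ⊆ R t' := by
    intro t t' htt'
    induction htt' with
    | refl => exact subset_rfl
    | step _ ih => exact ih.trans (hmono _)
  have hstep : ∀ t, R (t + 1) = {x | ∃ u ∈ R t, HasWalk E u x s} := by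
    intro t; ext x; constructor
    · intro hx
      obtain ⟨u, h1, h2⟩ := hasWalk_split
        (hasWalk_len_eq (show r + (t + 1) * s = (r + t * s) + s by ring) hx)
      exact ⟨u, h1, h2⟩
    · rintro ⟨u, hu, hux⟩
      exact hasWalk_len_eq (by ring) (hasWalk_concat hu hux)
  have hconst : ∀ t, R t = R (t + 1) → ∀ t', t ≤ t' → R t' = R t := by
    intro t heq t' htt'
    induction htt' with
    | refl => rfl
    | step _ ih =>
      rename_i m _
      rw [hstep m, ih, ← hstep t, ← heq]
  have hkey : R k ⊆ R (n - 1) := by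
    by_cases hex : ∃ t, t < n ∧ R t = R (t + 1)
    · obtain ⟨t, htn, heq⟩ := hex
      intro x hx
      rcases le_or_gt k (n - 1) with hk | hk
      · exact hmono' _ _ hk hx
      · have h1 : R k = R t := hconst t heq k (by omega)
        have h2 : R (n - 1) = R t := hconst t heq (n - 1) (by omega)
        rw [h2, ← h1]; exact hx
    · exfalso
      push_neg at hex
      have hgrow : ∀ t, t ≤ n → t + (R 0).ncard ≤ (R t).ncard := by
        intro t htn
        induction t with
        | zero => simp
        | succ t ih =>
          have hss : R t ⊂ R (t + 1) :=
            ssubset_of_subset_of_ne (hmono t) (hex t (by omega))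
          have h1 := Set.ncard_lt_ncard hss (Set.toFinite _)
          have h2 := ih (by omega)
          omega
      have hR0 : 1 ≤ (R 0).ncard := by
        obtain ⟨u, hu, -⟩ := hasWalk_split (hasWalk_len_eq (show r + k * s = r + k * s from rfl) h)
        have : u ∈ R 0 := hasWalk_len_eq (by ring) hu
        have hne : (R 0).Nonempty := ⟨u, this⟩
        exact (Set.ncard_pos (Set.toFinite _)).mpr hne
      have hle : (R n).ncard ≤ n := by
        have := Set.ncard_le_ncard (Set.subset_univ (R n)) (Set.toFinite _)
        simpa [Set.ncard_univ] using this
      have := hgrow n le_rfl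
      omega
  exact hkey h

end WalkLemmas

lemma final_assembly {n : ℕ} {E : Fin n → Fin n → Prop} {i c : Fin n} {s p m b2 : ℕ}
    (hap' : AperiodicAt E c) (hs0 : 0 < s)
    (hloop : HasWalk E c c s) (hq : HasWalk E c i b2)
    (hwic : HasWalk E i c p) (hpsn : p + s ≤ n) (hslt : s < n)
    (hm : n ^ 2 + 2 ≤ m + 2 * n) : HasWalk E i i m := by
  obtain ⟨s', rfl⟩ : ∃ s', s = s' + 1 := ⟨s - 1, by omega⟩
  obtain ⟨n2, rfl⟩ : ∃ n2, n = n2 + 2 := ⟨n - 2, by omega⟩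
  have hs'n : s' + 1 ≤ n2 + 1 := by omega
  have hple : p + (n2 + 1) * (s' + 1) ≤ m := by
    have h6 : n2 * (s' + 1) ≤ n2 * (n2 + 1) := Nat.mul_le_mul_left _ hs'n
    calc p + (n2 + 1) * (s' + 1) = (p + (s' + 1)) + n2 * (s' + 1) := by ring
      _ ≤ (n2 + 2) + n2 * (n2 + 1) := Nat.add_le_add hpsn h6
      _ ≤ m := by nlinarith [hm]
  set r' := m - (p + (n2 + 1) * (s' + 1)) with hr'
  set q := b2 with hqdef
  obtain ⟨e, he0, hew, hemod⟩ := residue_walk hap' (Nat.succ_pos s') hloop (r' + q * s')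
  set e' := e + (r' + 1) * (s' + 1) with he'
  have hwe' : HasWalk E c c e' := hasWalk_concat hew (mult_walk hloop (r' + 1))
  have hci : HasWalk E c i (e' + q) := hasWalk_concat hwe' hq
  have hmod : (e' + q) % (s' + 1) = r' % (s' + 1) := by
    have h2 : (e + ((r' + 1) * (s' + 1) + q)) % (s' + 1)
        = ((r' + q * s') + ((r' + 1) * (s' + 1) + q)) % (s' + 1) :=
      Nat.ModEq.add_right _ hemod
    calc (e' + q) % (s' + 1) = (e + ((r' + 1) * (s' + 1) + q)) % (s' + 1) := by
          rw [he']; ring_nf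
      _ = ((r' + q * s') + ((r' + 1) * (s' + 1) + q)) % (s' + 1) := h2
      _ = (r' + (q + r' + 1) * (s' + 1)) % (s' + 1) := by ring_nf
      _ = r' % (s' + 1) := Nat.add_mul_mod_self_right _ _ _
  have hge' : r' ≤ e' + q := by
    have h4 : r' + 1 ≤ (r' + 1) * (s' + 1) := Nat.le_mul_of_pos_right _ (Nat.succ_pos s')
    calc r' ≤ r' + 1 := Nat.le_succ r'
      _ ≤ (r' + 1) * (s' + 1) := h4
      _ ≤ e + (r' + 1) * (s' + 1) := Nat.le_add_left _ _
      _ = e' := he'.symm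
      _ ≤ e' + q := Nat.le_add_right _ _
  obtain ⟨kk, hkk⟩ : (s' + 1) ∣ (e' + q - r') :=
    (Nat.modEq_iff_dvd' hge').mp hmod.symm
  have hlen : e' + q = r' + kk * (s' + 1) := by
    have h8 := Nat.sub_add_cancel hge'
    rw [hkk] at h8
    rw [← h8]; ring
  have hwalkc : HasWalk E c i (r' + kk * (s' + 1)) := hasWalk_len_eq hlen hci
  have hchain := chain_walk hloop hwalkc
  have hchain' : HasWalk E c i (r' + (n2 + 1) * (s' + 1)) :=
    hasWalk_len_eq (by simp) hchain
  have hfin := hasWalk_concat hwic hchain'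
  refine hasWalk_len_eq ?_ hfin
  have h10 : p + (r' + (n2 + 1) * (s' + 1)) = (p + (n2 + 1) * (s' + 1)) + r' := by ring
  rw [h10, hr', Nat.add_sub_cancel' hple]

lemma exists_closed_walk {n : ℕ} {E : Fin n → Fin n → Prop}
    (hns : ∀ i, ∃ j, E i j) (hap : ∀ i, AperiodicAt E i)
    (i : Fin n) (m : ℕ) (hm : n ^ 2 + 2 ≤ m + 2 * n) : HasWalk E i i m := by
  classical
  have hn : 0 < n := i.pos
  by_cases hn1 : n = 1
  · subst hn1
    obtain ⟨j, hj⟩ := hns i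
    have hji : j = i := Subsingleton.elim j i
    exact ⟨fun _ => i, rfl, rfl, fun t _ => hji ▸ hj⟩
  have hn2 : 2 ≤ n := by omega
  -- a closed walk at i exists
  have hiw : ∃ t, 0 < t ∧ HasWalk E i i t := by
    by_contra hcon
    push_neg at hcon
    have := hap i 2 (fun t ht hw => absurd hw (hcon t ht))
    omega
  set SCC : Fin n → Prop := fun x => (∃ a, HasWalk E i x a) ∧ (∃ b, HasWalk E x i b) with hSCC
  set S : Set ℕ := {t | 0 < t ∧ ∃ x, SCC x ∧ HasWalk E x x t} with hS
  have hSne : S.Nonempty := by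
    obtain ⟨t, ht, hw⟩ := hiw
    exact ⟨t, ht, i, ⟨⟨0, hasWalk_refl E i⟩, ⟨0, hasWalk_refl E i⟩⟩, hw⟩
  obtain ⟨s, hsS, hsmin⟩ : ∃ s, s ∈ S ∧ ∀ t ∈ S, s ≤ t :=
    ⟨sInf S, Nat.sInf_mem hSne, fun t ht => Nat.sInf_le ht⟩
  obtain ⟨hs0, w, ⟨⟨a, hwa⟩, ⟨b, hwb⟩⟩, f, hf0, hfs, hfe⟩ := hsS
  -- the periodic extension of the minimal cycle
  set F : ℕ → Fin n := fun t => f (t % s) with hF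
  have hFedge : ∀ t, E (F t) (F (t + 1)) := by
    intro t
    have h1 : t % s < s := Nat.mod_lt _ hs0
    rcases Nat.lt_or_ge (t % s + 1) s with h | h
    · have h2 : (t + 1) % s = t % s + 1 := by
        rw [← Nat.mod_add_mod, Nat.mod_eq_of_lt h]
      show E (f (t % s)) (f ((t + 1) % s))
      rw [h2]
      exact hfe _ h1
    · have h2 : t % s + 1 = s := by omega
      have h3 : (t + 1) % s = 0 := by
        rw [← Nat.mod_add_mod, h2, Nat.mod_self]
      have h4 := hfe (t % s) h1
      rw [h2] at h4
      show E (f (t % s)) (f ((t + 1) % s))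
      rw [h3, hf0, ← hfs]
      exact h4
  have hFseg : ∀ p L, HasWalk E (F p) (F (p + L)) L :=
    fun p L => ⟨fun t => F (p + t), rfl, rfl, fun t _ => hFedge (p + t)⟩
  have hF0 : F 0 = w := by
    show f (0 % s) = w
    rw [Nat.zero_mod, hf0]
  have hFlt : ∀ t, t < s → F t = f t := by
    intro t ht
    show f (t % s) = f t
    rw [Nat.mod_eq_of_lt ht]
  have hFper : ∀ t, F (t + s) = F t := by
    intro t
    show f ((t + s) % s) = f (t % s)
    rw [Nat.add_mod_right]
  have hFtoW : ∀ t, HasWalk E (F t) w (s - t % s) := by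
    intro t
    have h1 := hFseg t (s - t % s)
    have h2 : F (t + (s - t % s)) = w := by
      obtain ⟨qq, u, hu, ht⟩ : ∃ qq u, u = t % s ∧ t = s * qq + u :=
        ⟨t / s, t % s, rfl, (Nat.div_add_mod t s).symm⟩
      have h3 : t + (s - t % s) = s + s * qq := by
        have := Nat.mod_lt t hs0
        omega
      show f ((t + (s - t % s)) % s) = w
      rw [h3, Nat.add_mul_mod_self_left, Nat.mod_self, hf0]
    rwa [h2] at h1
  have hSCCF : ∀ t, SCC (F t) := by
    intro t
    constructor
    · refine ⟨a + t, hasWalk_concat hwa ?_⟩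
      have := hFseg 0 t
      rwa [hF0, Nat.zero_add] at this
    · exact ⟨(s - t % s) + b, hasWalk_concat (hFtoW t) hwb⟩
  have hloopF : ∀ t, HasWalk E (F t) (F t) s := by
    intro t
    have := hFseg t s
    rwa [hFper t] at this
  -- injectivity of f on [0, s)
  have hinj : ∀ p q, p < q → q < s → f p ≠ f q := by
    intro p q hpq hqs heq
    have hw' : HasWalk E (f p) (f p) (q - p) :=
      ⟨fun t => f (p + t), rfl, by
        show f (p + (q - p)) = f p
        rw [show p + (q - p) = q by omega, ← heq],
        fun t ht => hfe (p + t) (by omega)⟩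
    have hmem : (q - p) ∈ S := by
      refine ⟨by omega, f p, ?_, hw'⟩
      have := hSCCF p
      rwa [hFlt p (by omega)] at this
    have := hsmin _ hmem
    omega
  have hinj' : ∀ p q, p < s → q < s → f p = f q → p = q := by
    intro p q hp hq heq
    by_contra hne
    rcases Nat.lt_or_ge p q with h | h
    · exact hinj p q h hq heq
    · exact hinj q p (by omega) hp heq.symm
  -- s ≤ n
  have hcardf : (Finset.image f (Finset.range s)).card = s := by
    rw [Finset.card_image_of_injOn, Finset.card_range]
    intro p hp q hq heq
    simp only [Finset.coe_range, Set.mem_Iio] at hp hq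
    exact hinj' p q hp hq heq
  have hsn : s ≤ n := by
    have h1 : (Finset.image f (Finset.range s)).card ≤ n := by
      have := Finset.card_le_univ (Finset.image f (Finset.range s))
      simpa using this
    omega
  -- s < n : otherwise f is a Hamiltonian cycle and the graph is the pure n-cycle
  have hslt : s < n := by
    rcases Nat.lt_or_ge s n with h | h
    · exact h
    exfalso
    have heqn : s = n := by omega
    have hsurj : ∀ x : Fin n, ∃ bb, bb < s ∧ f bb = x := by
      have himg : Finset.image f (Finset.range s) = Finset.univ := by
        apply Finset.eq_univ_of_card
        rw [hcardf, Fintype.card_fin, heqn]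
      intro x
      have : x ∈ Finset.image f (Finset.range s) := himg ▸ Finset.mem_univ x
      obtain ⟨bb, hbb, hfbb⟩ := Finset.mem_image.mp this
      exact ⟨bb, Finset.mem_range.mp hbb, hfbb⟩
    have huniq : ∀ aa, aa < s → ∀ x, E (f aa) x → x = f ((aa + 1) % s) := by
      intro aa haa x hx
      obtain ⟨bb, hbb, rfl⟩ := hsurj x
      by_cases hbbeq : bb = (aa + 1) % s
      · rw [hbbeq]
      exfalso
      have hxF : E (f aa) (F bb) := by rwa [hFlt bb hbb]
      rcases le_or_gt bb aa with hble | hble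
      · -- L = aa - bb, closed walk of length 1 + (aa - bb)
        have hseg := hFseg bb (aa - bb)
        rw [show bb + (aa - bb) = aa by omega, hFlt aa haa] at hseg
        have hcw : HasWalk E (f aa) (f aa) (1 + (aa - bb)) :=
          hasWalk_concat (hasWalk_single hxF) hseg
        have hmem : (1 + (aa - bb)) ∈ S := by
          refine ⟨by omega, f aa, ?_, hcw⟩
          have := hSCCF aa
          rwa [hFlt aa haa] at this
        have hlt : 1 + (aa - bb) < s := by
          rcases Nat.lt_or_ge (1 + (aa - bb)) s with h' | h'
          · exact h'
          exfalso
          apply hbbeq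
          have h1 : aa = s - 1 ∧ bb = 0 := by omega
          rw [h1.2, show aa + 1 = s by omega, Nat.mod_self]
        have := hsmin _ hmem
        omega
      · -- bb > aa; then bb ≥ aa + 2 since bb ≠ aa + 1
        have haas : aa + 1 < s := by omega
        have hbb2 : aa + 2 ≤ bb := by
          rcases Nat.lt_or_ge (aa + 1) bb with h' | h'
          · omega
          exfalso
          exact hbbeq (by rw [Nat.mod_eq_of_lt haas]; omega)
        have hseg := hFseg bb (s + aa - bb)
        have hFval : F (bb + (s + aa - bb)) = f aa := by
          rw [show bb + (s + aa - bb) = s + aa by omega]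
          show f ((s + aa) % s) = f aa
          rw [Nat.add_mod_left, Nat.mod_eq_of_lt haa]
        rw [hFval] at hseg
        have hcw : HasWalk E (f aa) (f aa) (1 + (s + aa - bb)) :=
          hasWalk_concat (hasWalk_single hxF) hseg
        have hmem : (1 + (s + aa - bb)) ∈ S := by
          refine ⟨by omega, f aa, ?_, hcw⟩
          have := hSCCF aa
          rwa [hFlt aa haa] at this
        have := hsmin _ hmem
        omega
    -- every closed walk at i has length divisible by s = n ≥ 2
    obtain ⟨cc, hcc, hfcc⟩ := hsurj i
    have hdiv : ∀ t, 0 < t → HasWalk E i i t → s ∣ t := by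
      rintro t ht ⟨g, hg0, hgt, hge⟩
      have hgu : ∀ u, u ≤ t → g u = f ((cc + u) % s) := by
        intro u
        induction u with
        | zero =>
          intro _
          rw [Nat.add_zero, Nat.mod_eq_of_lt hcc, hg0, hfcc]
        | succ u ih =>
          intro hut
          have h1 := ih (by omega)
          have h2 := hge u (by omega)
          rw [h1] at h2
          have h3 := huniq ((cc + u) % s) (Nat.mod_lt _ hs0) _ h2
          rw [h3, Nat.mod_add_mod]
          rfl
      have h4 := hgu t le_rfl
      have heqf : f ((cc + t) % s) = f cc := by rw [← h4, hgt, hfcc]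
      have h5 : (cc + t) % s = cc := hinj' _ _ (Nat.mod_lt _ hs0) hcc heqf
      have h6 : cc % s = (cc + t) % s := by rw [h5, Nat.mod_eq_of_lt hcc]
      have h7 : s ∣ cc + t - cc := (Nat.modEq_iff_dvd' (by omega)).mp h6
      rwa [Nat.add_sub_cancel_left] at h7
    have := hap i s hdiv
    omega
  -- shortest walk from i to the cycle
  set T : Set ℕ := {t | ∃ bb, bb < s ∧ HasWalk E i (f bb) t} with hT
  have hTne : T.Nonempty := ⟨a, 0, hs0, by rwa [hf0]⟩
  obtain ⟨p, hpT, hpmin⟩ : ∃ p, p ∈ T ∧ ∀ t ∈ T, p ≤ t :=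
    ⟨sInf T, Nat.sInf_mem hTne, fun t ht => Nat.sInf_le ht⟩
  obtain ⟨b0, hb0, g, hg0, hgp, hge⟩ := hpT
  have hgno : ∀ u, u < p → ∀ bb, bb < s → g u ≠ f bb := by
    intro u hu bb hbb hne
    have hmem : u ∈ T := ⟨bb, hbb, ⟨g, hg0, hne, fun t ht => hge t (by omega)⟩⟩
    have := hpmin u hmem
    omega
  have hginj : ∀ u1 u2, u1 < u2 → u2 < p → g u1 ≠ g u2 := by
    intro u1 u2 h12 h2p heq'
    have hw1 : HasWalk E i (g u1) u1 := ⟨g, hg0, rfl, fun t ht => hge t (by omega)⟩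
    have hw2 : HasWalk E (g u2) (f b0) (p - u2) :=
      ⟨fun t => g (u2 + t), rfl, by
        show g (u2 + (p - u2)) = f b0
        rw [show u2 + (p - u2) = p by omega, hgp],
        fun t ht => hge (u2 + t) (by omega)⟩
    have hmem : (u1 + (p - u2)) ∈ T := ⟨b0, hb0, hasWalk_concat hw1 (heq' ▸ hw2)⟩
    have := hpmin _ hmem
    omega
  -- p + s ≤ n
  have hpsn : p + s ≤ n := by
    have hcardg : (Finset.image g (Finset.range p)).card = p := by
      rw [Finset.card_image_of_injOn, Finset.card_range]
      intro u1 h1 u2 h2 heq'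
      simp only [Finset.coe_range, Set.mem_Iio] at h1 h2
      by_contra hne
      rcases Nat.lt_or_ge u1 u2 with h | h
      · exact hginj u1 u2 h h2 heq'
      · exact hginj u2 u1 (by omega) h1 heq'.symm
    have hdisj : Disjoint (Finset.image g (Finset.range p)) (Finset.image f (Finset.range s)) := by
      rw [Finset.disjoint_left]
      intro x hx1 hx2
      obtain ⟨u, hu, hgu⟩ := Finset.mem_image.mp hx1
      obtain ⟨bb, hbb, hfbb⟩ := Finset.mem_image.mp hx2
      exact hgno u (Finset.mem_range.mp hu) bb (Finset.mem_range.mp hbb) (by rw [hgu, hfbb])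
    have hcup := Finset.card_union_of_disjoint hdisj
    have hle := Finset.card_le_univ
      ((Finset.image g (Finset.range p)) ∪ (Finset.image f (Finset.range s)))
    rw [hcup, hcardg, hcardf] at hle
    simpa using hle
  -- assemble
  have hcF : F b0 = f b0 := hFlt b0 hb0
  have hloop : HasWalk E (f b0) (f b0) s := by
    have := hloopF b0
    rwa [hcF] at this
  have hq : HasWalk E (f b0) i ((s - b0 % s) + b) := by
    have h1 := hFtoW b0
    rw [hcF] at h1
    exact hasWalk_concat h1 hwb
  have hwic : HasWalk E i (f b0) p := ⟨g, hg0, hgp, hge⟩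
  exact final_assembly (hap (f b0)) hs0 hloop hq hwic hpsn hslt hm

lemma backProd_nonneg {n : ℕ} (A : ℕ → Matrix (Fin n) (Fin n) ℝ)
    (hA : ∀ k, 1 ≤ k → Stochastic (A k)) (l : ℕ) :
    ∀ m i j, 0 ≤ backProd A l m i j := by
  intro m
  induction m with
  | zero =>
    intro i j
    simp only [backProd, Matrix.one_apply]
    by_cases h : i = j <;> simp [h]
  | succ m ih =>
    intro i j
    simp only [backProd, Matrix.mul_apply]
    exact Finset.sum_nonneg fun x _ =>
      mul_nonneg ((hA _ (by omega)).1 _ _) (ih _ _)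

lemma backProd_split {n : ℕ} (A : ℕ → Matrix (Fin n) (Fin n) ℝ) (l : ℕ) :
    ∀ m, backProd A 0 (l + m) = backProd A l m * backProd A 0 l := by
  intro m
  induction m with
  | zero => simp [backProd]
  | succ m ih =>
    show backProd A 0 ((l + m) + 1) = backProd A l (m + 1) * backProd A 0 l
    simp only [backProd, ih, Matrix.mul_assoc, Nat.zero_add]

lemma walk_pos {n : ℕ} {A : ℕ → Matrix (Fin n) (Fin n) ℝ} {H : Fin n → Fin n → Prop}
    (hA : ∀ k, 1 ≤ k → Stochastic (A k))
    (hsub : ∀ k, 1 ≤ k → ∀ i j, H i j → 0 < A k i j) (l : ℕ) :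
    ∀ m u v, HasWalk H u v m → 0 < backProd A l m u v := by
  intro m
  induction m with
  | zero =>
    rintro u v ⟨f, hf0, hfm, -⟩
    have huv : u = v := by rw [← hf0, hfm]
    simp [backProd, Matrix.one_apply, huv]
  | succ m ih =>
    rintro u v ⟨f, hf0, hfm, hfe⟩
    have h1 : H u (f 1) := hf0 ▸ hfe 0 (Nat.succ_pos m)
    have h2 : HasWalk H (f 1) v m :=
      ⟨fun t => f (t + 1), rfl, hfm, fun t ht => hfe (t + 1) (by omega)⟩
    simp only [backProd, Matrix.mul_apply]
    refine Finset.sum_pos' (fun x _ => mul_nonneg ((hA _ (by omega)).1 _ _)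
      (backProd_nonneg A hA l m _ _)) ⟨f 1, Finset.mem_univ _, ?_⟩
    exact mul_pos (hsub _ (by omega) _ _ h1) (ih _ _ h2)

theorem stmt12 {n : ℕ} (A : ℕ → Matrix (Fin n) (Fin n) ℝ)
    (H : Fin n → Fin n → Prop)
    (hA : ∀ k, 1 ≤ k → Stochastic (A k))
    (hsub : ∀ k, 1 ≤ k → ∀ i j, H i j → 0 < A k i j)
    (hns : ∀ i : Fin n, ∃ j, H i j)
    (hap : ∀ i : Fin n, AperiodicAt H i)
    (l k : ℕ) (hlk : l ≤ k) (hW : n ^ 2 + 2 ≤ (k - l) + 2 * n)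
    (j i : Fin n) (hpos : 0 < backProd A 0 l i j) :
    0 < backProd A 0 k i j := by
  have hwalk : HasWalk H i i (k - l) := exists_closed_walk hns hap i (k - l) hW
  have hk : k = l + (k - l) := by omega
  rw [hk, backProd_split A l (k - l), Matrix.mul_apply]
  refine Finset.sum_pos' (fun x _ => mul_nonneg (backProd_nonneg A hA l _ _ _)
    (backProd_nonneg A hA 0 _ _ _)) ⟨i, Finset.mem_univ _, ?_⟩
  exact mul_pos (walk_pos hA hsub l _ i i hwalk) hpos
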